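/- Let n ≥ 1 and α > 0. The value max{ S(X) : X an n×n complex positive semidefinite matrix with Re Tr X ≤ α } equals e⁻¹·n when α ≥ e⁻¹·n, and equals −α·ln α + α·ln n when α ≤ e⁻¹·n. That is: every positive semidefinite X with Re Tr X ≤ α satisfies S(X) ≤ e⁻¹·n (resp. S(X) ≤ −α·ln α + α·ln n in the second case), and the bound is attained by X = e⁻¹·I (resp. X = (α/n)·I). -/

import Mathlib

open Matrix
open scoped ComplexOrder

/-- The matrix logarithm, applying `Real.log` (with `Real.log 0 = 0`) to the eigenvalues of a
Hermitian matrix via the continuous functional calculus (junk value on non-Hermitian input). -/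
noncomputable def matLog {n : ℕ} (M : Matrix (Fin n) (Fin n) ℂ) : Matrix (Fin n) (Fin n) ℂ :=
  cfc Real.log M

/-- The von Neumann entropy `S(X) = −Re Tr(X · log X)`. -/
noncomputable def vnEntropy {n : ℕ} (X : Matrix (Fin n) (Fin n) ℂ) : ℝ :=
  -((X * matLog X).trace).re

/- ### Auxiliary scalar lemmas -/

lemma aux_negMulLog_le_inv_exp {x : ℝ} (hx : 0 ≤ x) : Real.negMulLog x ≤ (Real.exp 1)⁻¹ := by
  rcases eq_or_lt_of_le hx with rfl | hx
  · simp [Real.negMulLog]; positivity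
  · have he : (0:ℝ) < Real.exp 1 := Real.exp_pos 1
    have h := Real.log_le_sub_one_of_pos (x := (x * Real.exp 1)⁻¹) (by positivity)
    rw [Real.log_inv, Real.log_mul (ne_of_gt hx) (ne_of_gt he), Real.log_exp] at h
    have hxe : (0:ℝ) < x * Real.exp 1 := by positivity
    rw [Real.negMulLog]
    rw [inv_eq_one_div] at h ⊢
    have h2 : -Real.log x ≤ 1/(x * Real.exp 1) := by linarith
    have h3 : x * (-Real.log x) ≤ x * (1/(x*Real.exp 1)) :=
      mul_le_mul_of_nonneg_left h2 (le_of_lt hx)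
    have h4 : x * (1/(x*Real.exp 1)) = 1 / Real.exp 1 := by
      field_simp
    have h5 : -x*Real.log x = x * -Real.log x := by ring
    linarith

lemma aux_negMulLog_monotoneOn : MonotoneOn Real.negMulLog (Set.Icc 0 (Real.exp 1)⁻¹) := by
  have hc : Convex ℝ (Set.Icc (0:ℝ) (Real.exp 1)⁻¹) := convex_Icc _ _
  have hint : interior (Set.Icc (0:ℝ) (Real.exp 1)⁻¹) = Set.Ioo 0 (Real.exp 1)⁻¹ :=
    interior_Icc
  apply monotoneOn_of_deriv_nonneg hc Real.continuous_negMulLog.continuousOn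
  · rw [hint]
    intro x hx
    exact (Real.differentiableAt_negMulLog (ne_of_gt hx.1)).differentiableWithinAt
  · rw [hint]
    intro x hx
    rw [Real.deriv_negMulLog (ne_of_gt hx.1)]
    have : Real.log x ≤ Real.log (Real.exp 1)⁻¹ :=
      Real.log_le_log (by exact hx.1) (le_of_lt hx.2)
    rw [Real.log_inv, Real.log_exp] at this
    linarith

lemma aux_jensen {n : ℕ} (hn : 0 < n) (l : Fin n → ℝ) (hl : ∀ i, 0 ≤ l i) :
    ∑ i, Real.negMulLog (l i) ≤ (n : ℝ) * Real.negMulLog ((∑ i, l i) / n) := by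
  have hn' : (0:ℝ) < n := Nat.cast_pos.mpr hn
  have h := Real.concaveOn_negMulLog.le_map_sum (t := Finset.univ)
    (w := fun _ : Fin n => (n:ℝ)⁻¹) (p := l)
    (fun i _ => by positivity)
    (by simp [Finset.sum_const]; field_simp)
    (fun i _ => hl i)
  simp only [smul_eq_mul] at h
  have h1 : ∑ i, (n:ℝ)⁻¹ * Real.negMulLog (l i) = (n:ℝ)⁻¹ * ∑ i, Real.negMulLog (l i) := by
    rw [Finset.mul_sum]
  have h2 : ∑ i, (n:ℝ)⁻¹ * l i = (∑ i, l i) / n := by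
    rw [← Finset.mul_sum]; ring
  rw [h1, h2] at h
  calc ∑ i, Real.negMulLog (l i)
      = (n:ℝ) * ((n:ℝ)⁻¹ * ∑ i, Real.negMulLog (l i)) := by field_simp
    _ ≤ (n:ℝ) * Real.negMulLog ((∑ i, l i) / n) :=
        mul_le_mul_of_nonneg_left h hn'.le

/- ### Trace and cfc lemmas -/

lemma aux_contOn_spec {n : ℕ} (X : Matrix (Fin n) (Fin n) ℂ) (g : ℝ → ℝ) :
    ContinuousOn g (spectrum ℝ X) := by
  rw [continuousOn_iff_continuous_restrict]
  have hf : (spectrum ℝ X).Finite := X.finite_real_spectrum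
  have : DiscreteTopology (spectrum ℝ X) := hf.instDiscreteTopology
  exact continuous_of_discreteTopology

lemma aux_trace_cfc_eq {n : ℕ} {X : Matrix (Fin n) (Fin n) ℂ} (hX : X.IsHermitian) (f : ℝ → ℝ) :
    (cfc f X).trace = ∑ i, ((f (hX.eigenvalues i) : ℝ) : ℂ) := by
  rw [hX.cfc_eq, Matrix.IsHermitian.cfc, Unitary.conjStarAlgAut_apply, Matrix.trace_mul_cycle,
    (Unitary.mem_iff.mp hX.eigenvectorUnitary.prop).1, one_mul, Matrix.trace_diagonal]
  rfl

lemma aux_mul_cfc_eq {n : ℕ} {X : Matrix (Fin n) (Fin n) ℂ} (hX : X.IsHermitian) (f : ℝ → ℝ) :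
    X * cfc f X = cfc (fun x => x * f x) X := by
  nth_rewrite 1 [← cfc_id ℝ X hX.isSelfAdjoint]
  rw [← cfc_mul _ _ X (aux_contOn_spec X id) (aux_contOn_spec X f)]
  rfl

lemma aux_vnEntropy_eq_sum {n : ℕ} {X : Matrix (Fin n) (Fin n) ℂ} (hX : X.IsHermitian) :
    vnEntropy X = ∑ i, Real.negMulLog (hX.eigenvalues i) := by
  rw [vnEntropy, matLog, aux_mul_cfc_eq hX, aux_trace_cfc_eq hX, Complex.re_sum]
  simp [Real.negMulLog, Finset.sum_neg_distrib]

lemma aux_trace_re_eq_sum {n : ℕ} {X : Matrix (Fin n) (Fin n) ℂ} (hX : X.IsHermitian) :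
    (X.trace).re = ∑ i, hX.eigenvalues i := by
  conv_lhs => rw [← cfc_id ℝ X hX.isSelfAdjoint]
  rw [aux_trace_cfc_eq hX id, Complex.re_sum]
  simp

/- ### Scalar matrices -/

lemma aux_matLog_smul_one {n : ℕ} (c : ℝ) :
    matLog (c • (1 : Matrix (Fin n) (Fin n) ℂ)) = Real.log c • 1 := by
  have h : c • (1 : Matrix (Fin n) (Fin n) ℂ) = algebraMap ℝ _ c :=
    (Algebra.algebraMap_eq_smul_one c).symm
  rw [matLog, h, cfc_algebraMap, Algebra.algebraMap_eq_smul_one]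

lemma aux_vnEntropy_smul_one {n : ℕ} (c : ℝ) :
    vnEntropy (c • (1 : Matrix (Fin n) (Fin n) ℂ)) = (n : ℝ) * Real.negMulLog c := by
  rw [vnEntropy, aux_matLog_smul_one, smul_mul_smul_comm, one_mul, Matrix.trace_smul,
    Matrix.trace_one]
  simp [Complex.real_smul, Real.negMulLog]
  ring

lemma aux_psd_smul_one {n : ℕ} {c : ℝ} (hc : 0 ≤ c) :
    (c • (1 : Matrix (Fin n) (Fin n) ℂ)).PosSemidef := by
  have h : c • (1 : Matrix (Fin n) (Fin n) ℂ) = (c : ℂ) • 1 := by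
    ext i j; simp [Complex.real_smul]
  rw [h]
  rw [Matrix.posSemidef_iff_dotProduct_mulVec]
  constructor
  · show ((c : ℂ) • (1 : Matrix (Fin n) (Fin n) ℂ))ᴴ = _
    rw [Matrix.conjTranspose_smul, Matrix.conjTranspose_one, Complex.star_def,
      Complex.conj_ofReal]
  · intro x
    rw [Matrix.smul_mulVec, Matrix.one_mulVec, dotProduct_smul, smul_eq_mul]
    exact mul_nonneg (by exact_mod_cast hc) (dotProduct_star_self_nonneg x)

lemma aux_trace_smul_one_re {n : ℕ} (c : ℝ) :
    ((c • (1 : Matrix (Fin n) (Fin n) ℂ)).trace).re = c * n := by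
  rw [Matrix.trace_smul, Matrix.trace_one]
  simp [Complex.real_smul]

/- ### Upper bound lemmas -/

lemma aux_bound1 {n : ℕ} (X : Matrix (Fin n) (Fin n) ℂ) (hX : X.PosSemidef) :
    vnEntropy X ≤ (Real.exp 1)⁻¹ * n := by
  rw [aux_vnEntropy_eq_sum hX.1]
  calc ∑ i, Real.negMulLog (hX.1.eigenvalues i)
      ≤ ∑ _i : Fin n, (Real.exp 1)⁻¹ :=
        Finset.sum_le_sum fun i _ => aux_negMulLog_le_inv_exp (hX.eigenvalues_nonneg i)
    _ = (Real.exp 1)⁻¹ * n := by simp [Finset.sum_const]; ring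

lemma aux_bound2 {n : ℕ} (hn : 1 ≤ n) {α : ℝ} (hα : 0 < α)
    (hαn : α ≤ (Real.exp 1)⁻¹ * n)
    (X : Matrix (Fin n) (Fin n) ℂ) (hX : X.PosSemidef) (htr : (X.trace).re ≤ α) :
    vnEntropy X ≤ -α * Real.log α + α * Real.log n := by
  have hn0 : 0 < n := hn
  have hn' : (0:ℝ) < n := Nat.cast_pos.mpr hn0
  set T : ℝ := ∑ i, hX.1.eigenvalues i with hT
  have hT0 : 0 ≤ T := Finset.sum_nonneg fun i _ => hX.eigenvalues_nonneg i
  have hTα : T ≤ α := by rw [← aux_trace_re_eq_sum hX.1] at hT; rw [hT]; exact htr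
  have step1 : vnEntropy X ≤ (n:ℝ) * Real.negMulLog (T / n) := by
    rw [aux_vnEntropy_eq_sum hX.1]
    exact aux_jensen hn0 _ (fun i => hX.eigenvalues_nonneg i)
  have hmem1 : T / n ∈ Set.Icc (0:ℝ) (Real.exp 1)⁻¹ := by
    constructor
    · positivity
    · calc T / n ≤ α / n := by gcongr
        _ ≤ (Real.exp 1)⁻¹ := by
            rw [div_le_iff₀ hn']; linarith [hαn]
  have hmem2 : α / n ∈ Set.Icc (0:ℝ) (Real.exp 1)⁻¹ := by
    constructor
    · positivity
    · rw [div_le_iff₀ hn']; linarith [hαn]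
  have step2 : Real.negMulLog (T / n) ≤ Real.negMulLog (α / n) :=
    aux_negMulLog_monotoneOn hmem1 hmem2 (by gcongr)
  have step3 : (n:ℝ) * Real.negMulLog (α / n) = -α * Real.log α + α * Real.log n := by
    rw [Real.negMulLog, Real.log_div (ne_of_gt hα) (ne_of_gt hn')]
    field_simp
    ring
  calc vnEntropy X ≤ (n:ℝ) * Real.negMulLog (T / n) := step1
    _ ≤ (n:ℝ) * Real.negMulLog (α / n) := mul_le_mul_of_nonneg_left step2 hn'.le
    _ = -α * Real.log α + α * Real.log n := step3

/-- **Maximal von Neumann entropy under a trace constraint** -/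
theorem stmt7 {n : ℕ} (hn : 1 ≤ n) (α : ℝ) (hα : 0 < α) :
    ((Real.exp 1)⁻¹ * n ≤ α →
      (∀ X : Matrix (Fin n) (Fin n) ℂ, X.PosSemidef → (X.trace).re ≤ α →
        vnEntropy X ≤ (Real.exp 1)⁻¹ * n)
      ∧ ((Real.exp 1)⁻¹ • (1 : Matrix (Fin n) (Fin n) ℂ)).PosSemidef
      ∧ (((Real.exp 1)⁻¹ • (1 : Matrix (Fin n) (Fin n) ℂ)).trace).re ≤ α
      ∧ vnEntropy ((Real.exp 1)⁻¹ • (1 : Matrix (Fin n) (Fin n) ℂ)) = (Real.exp 1)⁻¹ * n)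
    ∧ (α ≤ (Real.exp 1)⁻¹ * n →
      (∀ X : Matrix (Fin n) (Fin n) ℂ, X.PosSemidef → (X.trace).re ≤ α →
        vnEntropy X ≤ -α * Real.log α + α * Real.log n)
      ∧ ((α / n) • (1 : Matrix (Fin n) (Fin n) ℂ)).PosSemidef
      ∧ (((α / n) • (1 : Matrix (Fin n) (Fin n) ℂ)).trace).re ≤ α
      ∧ vnEntropy ((α / n) • (1 : Matrix (Fin n) (Fin n) ℂ)) = -α * Real.log α + α * Real.log n) := by
  have hn' : (0:ℝ) < n := Nat.cast_pos.mpr hn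
  constructor
  · intro h1
    refine ⟨fun X hX _ => aux_bound1 X hX, aux_psd_smul_one (by positivity), ?_, ?_⟩
    · rw [aux_trace_smul_one_re]; exact h1
    · rw [aux_vnEntropy_smul_one, Real.negMulLog, Real.log_inv, Real.log_exp]; ring
  · intro h2
    refine ⟨aux_bound2 hn hα h2, aux_psd_smul_one (by positivity), ?_, ?_⟩
    · rw [aux_trace_smul_one_re, div_mul_cancel₀ _ (ne_of_gt hn')]
    · rw [aux_vnEntropy_smul_one, Real.negMulLog,
        Real.log_div (ne_of_gt hα) (ne_of_gt hn')]
      field_simp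
      ring
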